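/- For all positive integers k ≤ l ≤ n, the Turán covering number T(n, l, k) — the smallest number of k-subsets of an n-set X such that every l-subset of X contains at least one of them — satisfies T(n, l, k) ≥ ((n−l+1)/(n−k+1)) · C(n,k) / C(l−1,k−1). -/

import Mathlib

open Finset

namespace DeCaenAux

variable {n : ℕ}

def free (F : Finset (Finset (Fin n))) (j : ℕ) : Finset (Finset (Fin n)) :=
  (Finset.powersetCard j Finset.univ).filter (fun M => ∀ A ∈ F, ¬ A ⊆ M)

lemma mem_free {F : Finset (Finset (Fin n))} {j : ℕ} {M : Finset (Fin n)} :
    M ∈ free F j ↔ M.card = j ∧ ∀ A ∈ F, ¬ A ⊆ M := by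
  simp [free, Finset.mem_powersetCard_univ]

lemma free_down {F : Finset (Finset (Fin n))} {j j' : ℕ} {M M' : Finset (Fin n)}
    (hM : M ∈ free F j) (h : M' ⊆ M) (hc : M'.card = j') : M' ∈ free F j' := by
  rw [mem_free] at hM ⊢
  exact ⟨hc, fun A hA hAM => hM.2 A hA (hAM.trans h)⟩

def ext (F : Finset (Finset (Fin n))) (r : ℕ) (R : Finset (Fin n)) : Finset (Fin n) :=
  Finset.univ.filter (fun x => x ∉ R ∧ insert x R ∈ free F r)

lemma mem_ext {F : Finset (Finset (Fin n))} {r : ℕ} {R : Finset (Fin n)} {x : Fin n} :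
    x ∈ ext F r R ↔ x ∉ R ∧ insert x R ∈ free F r := by simp [ext]

lemma sum_ext (F : Finset (Finset (Fin n))) (r : ℕ) :
    ∑ R ∈ free F r, (ext F (r+1) R).card = (r+1) * (free F (r+1)).card := by
  classical
  have h1 : ∑ R ∈ free F r, (ext F (r+1) R).card
      = ((free F r).sigma (fun R => ext F (r+1) R)).card := by
    rw [Finset.card_sigma]
  have h2 : ((free F (r+1)).sigma (fun Q => Q)).card = (r+1) * (free F (r+1)).card := by
    rw [Finset.card_sigma]
    rw [Finset.sum_congr rfl (fun Q hQ => (mem_free.1 hQ).1), Finset.sum_const, smul_eq_mul,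
      mul_comm]
  rw [h1, ← h2]
  apply Finset.card_bij' (fun p _ => (⟨insert p.2 p.1, p.2⟩ : Σ _ : Finset (Fin n), Fin n))
    (fun p _ => (⟨p.1.erase p.2, p.2⟩ : Σ _ : Finset (Fin n), Fin n))
  · rintro ⟨R, x⟩ hp
    simp only [Finset.mem_sigma, mem_ext] at hp ⊢
    exact ⟨hp.2.2, Finset.mem_insert_self _ _⟩
  · rintro ⟨Q, u⟩ hp
    simp only [Finset.mem_sigma, mem_ext] at hp ⊢
    obtain ⟨hQ, hu⟩ := hp
    have hcard : (Q.erase u).card = r := by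
      rw [Finset.card_erase_of_mem hu, (mem_free.1 hQ).1]
      omega
    refine ⟨free_down hQ (Finset.erase_subset _ _) hcard, Finset.notMem_erase _ _, ?_⟩
    rwa [Finset.insert_erase hu]
  · rintro ⟨R, x⟩ hp
    simp only [Finset.mem_sigma, mem_ext] at hp
    simp [Finset.erase_insert hp.2.1]
  · rintro ⟨Q, u⟩ hp
    simp only [Finset.mem_sigma, mem_ext] at hp
    simp [Finset.insert_erase hp.2]

lemma free_zero_of_zero {F : Finset (Finset (Fin n))} {r : ℕ}
    (h : (free F r).card = 0) : (free F (r+1)).card = 0 := by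
  have h2 := sum_ext F r
  rw [Finset.card_eq_zero] at h
  rw [h] at h2
  simp only [Finset.sum_empty] at h2
  rcases Nat.mul_eq_zero.1 h2.symm with h3 | h3
  · omega
  · exact h3

/-! ### The chain inequality -/

section Chain

variable (F : Finset (Finset (Fin n))) (s : ℕ)

/-- pairs (R, (u,v)): R a free s-set, u ≠ v both feasible extensions -/
noncomputable def pairT : Finset (Σ _ : Finset (Fin n), Fin n × Fin n) :=
  (free F s).sigma (fun R => (ext F (s+1) R).offDiag)

lemma mem_pairT {p : Σ _ : Finset (Fin n), Fin n × Fin n} :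
    p ∈ pairT F s ↔ p.1 ∈ free F s ∧ p.2.1 ∈ ext F (s+1) p.1 ∧ p.2.2 ∈ ext F (s+1) p.1
      ∧ p.2.1 ≠ p.2.2 := by
  rcases p with ⟨R, u, v⟩
  simp only [pairT, Finset.mem_sigma, Finset.mem_offDiag, and_assoc]

/-- sum of squares of extension degrees -/
lemma sum_sq_ext :
    ∑ R ∈ free F s, (ext F (s+1) R).card ^ 2
      = (pairT F s).card + (s+1) * (free F (s+1)).card := by
  rw [pairT, Finset.card_sigma, ← sum_ext F s, ← Finset.sum_add_distrib]
  apply Finset.sum_congr rfl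
  intro R _
  rw [Finset.offDiag_card]
  have hsq : (ext F (s+1) R).card ^ 2 = (ext F (s+1) R).card * (ext F (s+1) R).card := sq _
  rcases Nat.eq_zero_or_pos (ext F (s+1) R).card with h0 | h0
  · simp [h0]
  · have := Nat.le_mul_of_pos_left (ext F (s+1) R).card h0
    omega

/-- Cauchy–Schwarz -/
lemma cs_ineq :
    ((s+1) * (free F (s+1)).card)^2
      ≤ (free F s).card * ((pairT F s).card + (s+1) * (free F (s+1)).card) := by
  rw [← sum_sq_ext F s, ← sum_ext F s]
  have h := Finset.sum_mul_sq_le_sq_mul_sq (free F s) (fun _ => (1:ℝ))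
    (fun R => ((ext F (s+1) R).card : ℝ))
  simp only [one_pow, one_mul, Finset.sum_const, nsmul_eq_mul, mul_one] at h
  have h2 : ((∑ R ∈ free F s, (ext F (s+1) R).card : ℕ) : ℝ)^2
      ≤ (((free F s).card * ∑ R ∈ free F s, (ext F (s+1) R).card ^ 2 : ℕ) : ℝ) := by
    push_cast
    exact h
  exact_mod_cast h2

/-- good pairs: the union is free -/
noncomputable def goodT : Finset (Σ _ : Finset (Fin n), Fin n × Fin n) :=
  (pairT F s).filter (fun p => insert p.2.1 (insert p.2.2 p.1) ∈ free F (s+2))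

noncomputable def badT : Finset (Σ _ : Finset (Fin n), Fin n × Fin n) :=
  (pairT F s).filter (fun p => insert p.2.1 (insert p.2.2 p.1) ∉ free F (s+2))

lemma goodT_badT : (goodT F s).card + (badT F s).card = (pairT F s).card :=
  Finset.card_filter_add_card_filter_not _

lemma goodT_card : (goodT F s).card = ((s+2)*(s+2) - (s+2)) * (free F (s+2)).card := by
  classical
  have htarget : ((free F (s+2)).sigma (fun X => X.offDiag)).card
      = ((s+2)*(s+2) - (s+2)) * (free F (s+2)).card := by
    rw [Finset.card_sigma]
    have : ∀ X ∈ free F (s+2), X.offDiag.card = (s+2)*(s+2) - (s+2) := by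
      intro X hX
      rw [Finset.offDiag_card, (mem_free.1 hX).1]
    rw [Finset.sum_congr rfl this, Finset.sum_const, smul_eq_mul, mul_comm]
  rw [← htarget]
  apply Finset.card_bij'
    (fun p _ => (⟨insert p.2.1 (insert p.2.2 p.1), p.2⟩ : Σ _ : Finset (Fin n), Fin n × Fin n))
    (fun q _ => (⟨(q.1.erase q.2.1).erase q.2.2, q.2⟩ : Σ _ : Finset (Fin n), Fin n × Fin n))
  · rintro ⟨R, u, v⟩ hp
    simp only [goodT, Finset.mem_filter, mem_pairT, mem_ext] at hp
    obtain ⟨⟨hR, ⟨huR, hufree⟩, ⟨hvR, hvfree⟩, huv⟩, hgood⟩ := hp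
    simp only [Finset.mem_sigma, Finset.mem_offDiag]
    refine ⟨hgood, ?_, ?_, huv⟩
    · exact Finset.mem_insert_self _ _
    · exact Finset.mem_insert_of_mem (Finset.mem_insert_self _ _)
  · rintro ⟨X, u, v⟩ hq
    simp only [Finset.mem_sigma, Finset.mem_offDiag] at hq
    obtain ⟨hX, hu, hv, huv⟩ := hq
    have hXcard : X.card = s + 2 := (mem_free.1 hX).1
    have hvX : v ∈ X.erase u := Finset.mem_erase.2 ⟨fun h => huv h.symm, hv⟩
    have huXv : u ∈ X.erase v := Finset.mem_erase.2 ⟨fun h => huv h, hu⟩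
    have hRcard : ((X.erase u).erase v).card = s := by
      rw [Finset.card_erase_of_mem hvX, Finset.card_erase_of_mem hu, hXcard]
      omega
    have hins_v : insert v ((X.erase u).erase v) = X.erase u := Finset.insert_erase hvX
    have hins_u : insert u ((X.erase u).erase v) = X.erase v := by
      rw [Finset.erase_right_comm]
      exact Finset.insert_erase huXv
    have hRsub : (X.erase u).erase v ⊆ X :=
      (Finset.erase_subset _ _).trans (Finset.erase_subset _ _)
    have hfull : insert u (insert v ((X.erase u).erase v)) = X := by
      rw [hins_v, Finset.insert_erase hu]
    simp only [goodT, Finset.mem_filter, mem_pairT, mem_ext]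
    have huR : u ∉ (X.erase u).erase v := fun h =>
      Finset.notMem_erase u X ((Finset.erase_subset _ _) h)
    have hvR : v ∉ (X.erase u).erase v := Finset.notMem_erase _ _
    refine ⟨⟨free_down hX hRsub hRcard, ⟨huR, ?_⟩, ⟨hvR, ?_⟩, huv⟩, ?_⟩
    · rw [hins_u]
      exact free_down hX (Finset.erase_subset _ _)
        (by rw [Finset.card_erase_of_mem hv, hXcard]; omega)
    · rw [hins_v]
      exact free_down hX (Finset.erase_subset _ _)
        (by rw [Finset.card_erase_of_mem hu, hXcard]; omega)
    · rw [hfull]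
      exact hX
  · rintro ⟨R, u, v⟩ hp
    simp only [goodT, Finset.mem_filter, mem_pairT, mem_ext] at hp
    obtain ⟨⟨hR, ⟨huR, hufree⟩, ⟨hvR, hvfree⟩, huv⟩, hgood⟩ := hp
    have h1 : (insert u (insert v R)).erase u = insert v R := by
      apply Finset.erase_insert
      simp only [Finset.mem_insert]
      push_neg
      exact ⟨huv, huR⟩
    simp only [h1, Finset.erase_insert hvR]
  · rintro ⟨X, u, v⟩ hq
    simp only [Finset.mem_sigma, Finset.mem_offDiag] at hq
    obtain ⟨hX, hu, hv, huv⟩ := hq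
    have hvX : v ∈ X.erase u := Finset.mem_erase.2 ⟨fun h => huv h.symm, hv⟩
    have : insert u (insert v ((X.erase u).erase v)) = X := by
      rw [Finset.insert_erase hvX, Finset.insert_erase hu]
    simp [this]

/-- base pairs (Q, v): Q free (s+1)-set, v outside Q -/
noncomputable def allBase : Finset (Σ _ : Finset (Fin n), Fin n) :=
  (free F (s+1)).sigma (fun Q => Qᶜ)

noncomputable def goodBase : Finset (Σ _ : Finset (Fin n), Fin n) :=
  (allBase F s).filter (fun p => insert p.2 p.1 ∈ free F (s+2))

noncomputable def badBase : Finset (Σ _ : Finset (Fin n), Fin n) :=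
  (allBase F s).filter (fun p => insert p.2 p.1 ∉ free F (s+2))

lemma goodBase_badBase : (goodBase F s).card + (badBase F s).card = (allBase F s).card :=
  Finset.card_filter_add_card_filter_not _

lemma allBase_card : (allBase F s).card = (free F (s+1)).card * (n - (s+1)) := by
  rw [allBase, Finset.card_sigma]
  have : ∀ Q ∈ free F (s+1), (Qᶜ : Finset (Fin n)).card = n - (s+1) := by
    intro Q hQ
    rw [Finset.card_compl, (mem_free.1 hQ).1, Fintype.card_fin]
  rw [Finset.sum_congr rfl this, Finset.sum_const, smul_eq_mul]

lemma goodBase_card : (goodBase F s).card = (s+2) * (free F (s+2)).card := by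
  classical
  have heq : goodBase F s = (free F (s+1)).sigma (fun Q => ext F (s+2) Q) := by
    apply Finset.ext
    rintro ⟨Q, v⟩
    simp only [goodBase, allBase, Finset.mem_filter, Finset.mem_sigma, mem_ext,
      Finset.mem_compl]
    tauto
  rw [heq, Finset.card_sigma, sum_ext F (s+1)]

lemma badT_le (k : ℕ) (hFk : ∀ A ∈ F, A.card = k) :
    (badT F s).card ≤ (k-1) * (badBase F s).card := by
  classical
  have himg : (badT F s).card ≤ (k-1) * ((badBase F s).image (fun q => (q.1, q.2))).card := by
    apply Finset.card_le_mul_card_image_of_maps_to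
      (f := fun p => ((insert p.2.1 p.1, p.2.2) : Finset (Fin n) × Fin n))
    · rintro ⟨R, u, v⟩ hp
      simp only [badT, Finset.mem_filter, mem_pairT, mem_ext] at hp
      obtain ⟨⟨hR, ⟨huR, hufree⟩, ⟨hvR, hvfree⟩, huv⟩, hbad⟩ := hp
      apply Finset.mem_image.2
      refine ⟨⟨insert u R, v⟩, ?_, rfl⟩
      simp only [badBase, allBase, Finset.mem_filter, Finset.mem_sigma, Finset.mem_compl]
      refine ⟨⟨hufree, ?_⟩, ?_⟩
      · simp only [Finset.mem_insert]
        push_neg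
        exact ⟨fun h => huv h.symm, hvR⟩
      · rwa [Finset.insert_comm]
    · intro b hb
      obtain ⟨⟨Q, w⟩, hb', rfl⟩ := Finset.mem_image.1 hb
      simp only [badBase, allBase, Finset.mem_filter, Finset.mem_sigma, Finset.mem_compl] at hb'
      obtain ⟨⟨hQ, hwQ⟩, hbad⟩ := hb'
      have hcard : (insert w Q).card = s + 2 := by
        rw [Finset.card_insert_of_notMem hwQ, (mem_free.1 hQ).1]
      have hA : ∃ A ∈ F, A ⊆ insert w Q := by
        by_contra hno
        push_neg at hno
        exact hbad (mem_free.2 ⟨hcard, hno⟩)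
      obtain ⟨A, hAF, hAsub⟩ := hA
      have hwA : w ∈ A := by
        by_contra hwA
        exact (mem_free.1 hQ).2 A hAF ((Finset.subset_insert_iff_of_notMem hwA).1 hAsub)
      have hinj : (Finset.filter
          (fun p => ((insert p.2.1 p.1, p.2.2) : Finset (Fin n) × Fin n) = (Q, w))
          (badT F s)).card ≤ (A.erase w).card := by
        apply Finset.card_le_card_of_injOn (fun p => p.2.1)
        · rintro ⟨R, u, v⟩ hp
          simp only [Finset.mem_coe, Finset.mem_filter, badT, mem_pairT, mem_ext, Prod.mk.injEq] at hp
          obtain ⟨⟨⟨hR, ⟨huR, hufree⟩, ⟨hvR, hvfree⟩, huv⟩, hbad'⟩, hQeq, hveq⟩ := hp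
          subst hveq
          have huQ : u ∈ Q := by rw [← hQeq]; exact Finset.mem_insert_self _ _
          have huw : u ≠ v := fun h => hwQ (h ▸ huQ)
          have huA : u ∈ A := by
            by_contra huA
            have hsub2 : A ⊆ insert v R := by
              intro a haA
              have h2 := hAsub haA
              simp only [Finset.mem_insert] at h2 ⊢
              rcases h2 with h | h
              · exact Or.inl h
              · rw [← hQeq] at h
                simp only [Finset.mem_insert] at h
                rcases h with h | h
                · exact absurd (h ▸ haA) huA
                · exact Or.inr h
            exact (mem_free.1 hvfree).2 A hAF hsub2
          exact Finset.mem_erase.2 ⟨huw, huA⟩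
        · rintro ⟨R, u, v⟩ hp ⟨R', u', v'⟩ hp' huu
          simp only [Finset.mem_coe, Finset.mem_filter, badT, mem_pairT, mem_ext,
            Prod.mk.injEq] at hp hp'
          obtain ⟨⟨⟨_, ⟨huR, _⟩, _, _⟩, _⟩, hQeq, hveq⟩ := hp
          obtain ⟨⟨⟨_, ⟨huR', _⟩, _, _⟩, _⟩, hQeq', hveq'⟩ := hp'
          simp only at huu
          have hveq2 : v = v' := by rw [hveq, hveq']
          have hReq : R = R' := by
            have h1 : (insert u R).erase u = R := Finset.erase_insert huR
            have h2 : (insert u' R').erase u' = R' := Finset.erase_insert huR'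
            rw [← h1, ← h2, hQeq, hQeq', huu]
          subst hReq hveq2 huu
          rfl
      have hAcard : (A.erase w).card ≤ k - 1 := by
        rw [Finset.card_erase_of_mem hwA, hFk A hAF]
      exact hinj.trans hAcard
  exact himg.trans (Nat.mul_le_mul_left _ (Finset.card_image_le))

/-- The de Caen chain inequality, natural number form. -/
lemma chainN (k : ℕ) (hFk : ∀ A ∈ F, A.card = k) :
    ((s+1) * (free F (s+1)).card)^2 + (k-1) * ((s+2) * (free F (s+2)).card) * (free F s).card
      ≤ (free F s).card * ((s+2)*(s+2) - (s+2)) * (free F (s+2)).card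
        + (free F s).card * ((s+1) * (free F (s+1)).card)
        + (free F s).card * ((k-1) * ((free F (s+1)).card * (n - (s+1)))) := by
  have hcs := cs_ineq F s
  have hgb := goodT_badT F s
  have hgc := goodT_card F s
  have hbt := badT_le F s k hFk
  have hbb := goodBase_badBase F s
  have hgbc := goodBase_card F s
  have hab := allBase_card F s
  -- pairT = goodT + badT ≤ goodT + (k-1)*badBase
  -- (k-1)*goodBase + (k-1)*badBase = (k-1)*allBase
  calc ((s+1) * (free F (s+1)).card)^2 + (k-1) * ((s+2) * (free F (s+2)).card) * (free F s).card
      = ((s+1) * (free F (s+1)).card)^2 + (free F s).card * ((k-1) * (goodBase F s).card) := by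
        rw [hgbc]; ring
    _ ≤ (free F s).card * ((pairT F s).card + (s+1) * (free F (s+1)).card)
        + (free F s).card * ((k-1) * (goodBase F s).card) := by
        exact Nat.add_le_add_right hcs _
    _ = (free F s).card * ((goodT F s).card + (badT F s).card + (s+1) * (free F (s+1)).card
        + (k-1) * (goodBase F s).card) := by rw [← hgb]; ring
    _ ≤ (free F s).card * ((goodT F s).card + (k-1) * (badBase F s).card
        + (s+1) * (free F (s+1)).card + (k-1) * (goodBase F s).card) := by
        apply Nat.mul_le_mul_left
        omega
    _ = (free F s).card * ((goodT F s).card + (s+1) * (free F (s+1)).card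
        + (k-1) * ((goodBase F s).card + (badBase F s).card)) := by ring_nf
    _ = (free F s).card * ((s+2)*(s+2) - (s+2)) * (free F (s+2)).card
        + (free F s).card * ((s+1) * (free F (s+1)).card)
        + (free F s).card * ((k-1) * ((free F (s+1)).card * (n - (s+1)))) := by
        rw [hgc, hbb, hab]; ring

end Chain

/-! ### Level facts -/

lemma card_free_lt (F : Finset (Finset (Fin n))) {j k : ℕ} (hFk : ∀ A ∈ F, A.card = k)
    (hj : j < k) : (free F j).card = n.choose j := by
  have hfe : free F j = Finset.powersetCard j Finset.univ := by
    apply Finset.ext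
    intro M
    simp only [mem_free, Finset.mem_powersetCard_univ]
    constructor
    · exact fun h => h.1
    · intro h
      refine ⟨h, fun A hA hAM => ?_⟩
      have h1 := Finset.card_le_card hAM
      rw [hFk A hA, h] at h1
      omega
  rw [hfe, Finset.card_powersetCard, Finset.card_univ, Fintype.card_fin]

lemma card_free_eq (F : Finset (Finset (Fin n))) {k : ℕ}
    (hFk : ∀ A ∈ F, A.card = k) : (free F k).card + F.card = n.choose k := by
  classical
  have hsub : F ⊆ Finset.powersetCard k Finset.univ := by
    intro A hA
    rw [Finset.mem_powersetCard_univ]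
    exact hFk A hA
  have hfe : free F k = Finset.powersetCard k Finset.univ \ F := by
    apply Finset.ext
    intro M
    simp only [mem_free, Finset.mem_sdiff, Finset.mem_powersetCard_univ]
    constructor
    · rintro ⟨h1, h2⟩
      exact ⟨h1, fun hM => h2 M hM Finset.Subset.rfl⟩
    · rintro ⟨h1, h2⟩
      refine ⟨h1, fun A hA hAM => h2 ?_⟩
      have hAM' : A = M := Finset.eq_of_subset_of_card_le hAM (by rw [hFk A hA, h1])
      rwa [← hAM']
  have hle := Finset.card_le_card hsub
  rw [Finset.card_powersetCard, Finset.card_univ, Fintype.card_fin] at hle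
  rw [hfe, Finset.card_sdiff_of_subset hsub, Finset.card_powersetCard, Finset.card_univ,
    Fintype.card_fin]
  omega

lemma card_free_top (F : Finset (Finset (Fin n))) {l : ℕ}
    (hcov : ∀ L : Finset (Fin n), L.card = l → ∃ A ∈ F, A ⊆ L) :
    (free F l).card = 0 := by
  rw [Finset.card_eq_zero]
  apply Finset.eq_empty_of_forall_notMem
  intro M hM
  obtain ⟨h1, h2⟩ := mem_free.1 hM
  obtain ⟨A, hA, hAM⟩ := hcov M h1
  exact h2 A hA hAM

lemma idy1 {n k : ℕ} (hk : 0 < k) :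
    k * n.choose k = (n - (k-1)) * n.choose (k-1) := by
  have h := Nat.choose_succ_right_eq n (k-1)
  have hk1 : k - 1 + 1 = k := by omega
  rw [hk1] at h
  calc k * n.choose k = n.choose k * k := by ring
    _ = n.choose (k-1) * (n - (k-1)) := h
    _ = (n - (k-1)) * n.choose (k-1) := by ring

lemma idy2 {s k : ℕ} (hk : 0 < k) :
    (s+1) * Nat.choose s (k-1) = ((s+1) - (k-1)) * Nat.choose (s+1) (k-1) := by
  have h1 := Nat.add_one_mul_choose_eq s (k-1)
  have h2 := Nat.choose_succ_right_eq (s+1) (k-1)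
  have hk1 : k - 1 + 1 = k := by omega
  rw [hk1] at h1 h2
  calc (s+1) * Nat.choose s (k-1) = (s+1).choose k * k := h1
    _ = (s + 1).choose (k-1) * (s + 1 - (k-1)) := h2
    _ = ((s+1) - (k-1)) * Nat.choose (s+1) (k-1) := by ring

end DeCaenAux

set_option maxHeartbeats 1000000 in
open DeCaenAux in
/-- Turán covering number lower bound: any family `F` of `k`-subsets of `[n]`
such that every `l`-subset contains at least one member of `F` satisfies
`|F| ≥ ((n-l+1)/(n-k+1)) · C(n,k) / C(l-1,k-1)`. -/
theorem stmt0 (n l k : ℕ) (hk : 0 < k) (hkl : k ≤ l) (hln : l ≤ n)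
    (F : Finset (Finset (Fin n)))
    (hFk : ∀ A ∈ F, A.card = k)
    (hcov : ∀ L : Finset (Fin n), L.card = l → ∃ A ∈ F, A ⊆ L) :
    ((n : ℝ) - l + 1) / ((n : ℝ) - k + 1) * (n.choose k) / ((l - 1).choose (k - 1))
      ≤ (F.card : ℝ) := by
  classical
  have hkn : k ≤ n := hkl.trans hln
  have hk1n : k - 1 ≤ n := le_trans (Nat.sub_le k 1) hkn
  have e1 : ((k - 1 : ℕ) : ℝ) = (k : ℝ) - 1 := by
    rw [Nat.cast_sub hk]; norm_num
  have hidR : (k : ℝ) * (n.choose k : ℝ) = ((n : ℝ) - k + 1) * (n.choose (k-1) : ℝ) := by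
    have h := idy1 (n := n) hk
    have hcast : ((k * n.choose k : ℕ) : ℝ) = (((n - (k-1)) * n.choose (k-1) : ℕ) : ℝ) := by
      exact_mod_cast h
    rw [Nat.cast_mul, Nat.cast_mul, Nat.cast_sub hk1n, e1] at hcast
    have hx : (n : ℝ) - ((k:ℝ) - 1) = (n:ℝ) - k + 1 := by ring
    rw [hx] at hcast
    exact hcast
  have hCC0 : (0:ℝ) ≤ (n.choose (k-1) : ℝ) := by positivity
  have key : ((n:ℝ) - l + 1) * (n.choose (k-1) : ℝ)
      ≤ (k:ℝ) * (F.card : ℝ) * ((l-1).choose (k-1) : ℝ) := by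
    have main : ∀ s : ℕ, k - 1 ≤ s → s + 1 ≤ l →
        (((n:ℝ) - l + 1) * (n.choose (k-1):ℝ)
            ≤ (k:ℝ) * (F.card:ℝ) * ((l-1).choose (k-1):ℝ)) ∨
        (0 < (free F (s+1)).card ∧
          ((s:ℝ)+1) * ((free F (s+1)).card : ℝ) * (n.choose (k-1):ℝ)
            + ((free F s).card : ℝ) * ((k:ℝ) * (F.card:ℝ) * (s.choose (k-1):ℝ))
          ≥ ((free F s).card : ℝ) * (((n:ℝ) - s) * (n.choose (k-1):ℝ))) := by
      intro s hs
      induction s, hs using Nat.le_induction with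
      | base =>
        intro _
        have hk1 : k - 1 + 1 = k := by omega
        rcases Nat.eq_zero_or_pos (free F k).card with h0 | h0
        · left
          have hmck : F.card = n.choose k := by
            have := card_free_eq F hFk
            omega
          have hBl : (1:ℝ) ≤ ((l-1).choose (k-1) : ℝ) := by
            exact_mod_cast Nat.choose_pos (by omega : k - 1 ≤ l - 1)
          have hlk : ((n:ℝ) - l + 1) ≤ ((n:ℝ) - k + 1) := by
            have : (k:ℝ) ≤ (l:ℝ) := by exact_mod_cast hkl
            linarith
          have hnl0 : (0:ℝ) ≤ (n:ℝ) - l + 1 := by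
            have : (l:ℝ) ≤ (n:ℝ) := by exact_mod_cast hln
            linarith
          have hkm0 : (0:ℝ) ≤ (k:ℝ) * (F.card:ℝ) := by positivity
          calc ((n:ℝ) - l + 1) * (n.choose (k-1):ℝ)
              ≤ ((n:ℝ) - k + 1) * (n.choose (k-1):ℝ) :=
                mul_le_mul_of_nonneg_right hlk hCC0
            _ = (k:ℝ) * (n.choose k : ℝ) := hidR.symm
            _ = (k:ℝ) * (F.card : ℝ) := by rw [hmck]
            _ ≤ (k:ℝ) * (F.card:ℝ) * ((l-1).choose (k-1):ℝ) := by
                have := mul_le_mul_of_nonneg_left hBl hkm0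
                linarith
        · right
          constructor
          · rwa [hk1]
          · have hcknat := card_free_eq F (k := k) hFk
            have hle : F.card ≤ n.choose k := by omega
            have hckR : ((free F ((k-1)+1)).card : ℝ) = (n.choose k : ℝ) - (F.card:ℝ) := by
              rw [hk1]
              have hfr : (free F k).card = n.choose k - F.card := by omega
              rw [hfr, Nat.cast_sub hle]
            have hcm1 : ((free F (k-1)).card : ℝ) = (n.choose (k-1) : ℝ) := by
              rw [card_free_lt F hFk (by omega : k - 1 < k)]
            have hBk : (((k-1).choose (k-1) : ℕ) : ℝ) = 1 := by
              rw [Nat.choose_self]; norm_num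
            rw [hckR, hcm1, hBk, e1]
            have h2 : (k:ℝ) * (n.choose k:ℝ) * (n.choose (k-1):ℝ)
                = ((n:ℝ) - k + 1) * (n.choose (k-1):ℝ) * (n.choose (k-1):ℝ) := by
              rw [hidR]
            linarith [h2]
      | succ s hs ih =>
        intro hsl2
        have hsl' : s + 1 ≤ l := by omega
        rcases ih hsl' with hgoal | ⟨hpos, hinv⟩
        · exact Or.inl hgoal
        · have hposs : 0 < (free F s).card := by
            by_contra h0
            push_neg at h0
            have h0' : (free F s).card = 0 := by omega
            have := free_zero_of_zero h0'
            omega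
          have hsn : s + 1 ≤ n := by omega
          have hchainN := chainN F s k hFk
          have h22 : (s+2)*(s+2) - (s+2) = (s+2)*(s+1) := by
            have h : (s+2)*(s+1) + (s+2) = (s+2)*(s+2) := by ring
            omega
          rw [h22] at hchainN
          have hchainR : ((((s+1) * (free F (s+1)).card)^2
                + (k-1) * ((s+2) * (free F (s+2)).card) * (free F s).card : ℕ) : ℝ)
              ≤ (((free F s).card * ((s+2)*(s+1)) * (free F (s+2)).card
                + (free F s).card * ((s+1) * (free F (s+1)).card)
                + (free F s).card * ((k-1) * ((free F (s+1)).card * (n - (s+1)))) : ℕ) : ℝ) :=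
            Nat.cast_le.2 hchainN
          have ens : ((n - (s+1) : ℕ) : ℝ) = (n:ℝ) - ((s:ℝ)+1) := by
            rw [Nat.cast_sub hsn]; push_cast; ring
          push_cast [e1, ens] at hchainR
          have hI2 : ((s:ℝ)+1) * (s.choose (k-1) : ℝ)
              = (((s:ℝ)+2) - k) * ((s+1).choose (k-1) : ℝ) := by
            have h := idy2 (s := s) hk
            have hle2 : k - 1 ≤ s + 1 := by omega
            have hcast : (((s+1) * Nat.choose s (k-1) : ℕ):ℝ)
                = ((((s+1) - (k-1)) * Nat.choose (s+1) (k-1) : ℕ):ℝ) := by exact_mod_cast h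
            rw [Nat.cast_mul, Nat.cast_mul, Nat.cast_sub hle2, e1] at hcast
            push_cast at hcast
            linear_combination hcast
          have hApos : (0:ℝ) < ((free F s).card : ℝ) := by exact_mod_cast hposs
          have hBpos : (0:ℝ) < ((free F (s+1)).card : ℝ) := by exact_mod_cast hpos
          have hskpos : (0:ℝ) < ((s:ℝ)+2) - (k:ℝ) := by
            have : (k:ℝ) ≤ (s:ℝ)+1 := by exact_mod_cast (by omega : k ≤ s+1)
            linarith
          have hd0 : (0:ℝ) ≤ ((free F (s+2)).card : ℝ) := by positivity
          have hinv1 : ((s:ℝ)+2) * ((free F (s+2)).card:ℝ) * (n.choose (k-1):ℝ)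
              + ((free F (s+1)).card:ℝ) * ((k:ℝ) * (F.card:ℝ) * ((s+1).choose (k-1):ℝ))
              ≥ ((free F (s+1)).card:ℝ) * (((n:ℝ) - ((s:ℝ)+1)) * (n.choose (k-1):ℝ)) := by
            have hH1 := mul_le_mul_of_nonneg_right hchainR hCC0
            have hinv' : ((free F s).card : ℝ) * (((n:ℝ) - s) * (n.choose (k-1):ℝ))
                ≤ ((s:ℝ)+1) * ((free F (s+1)).card : ℝ) * (n.choose (k-1):ℝ)
                  + ((free F s).card : ℝ) * ((k:ℝ) * (F.card:ℝ) * (s.choose (k-1):ℝ)) := hinv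
            have hH2 := mul_le_mul_of_nonneg_left hinv'
              (by positivity : (0:ℝ) ≤ ((s:ℝ)+1) * ((free F (s+1)).card:ℝ))
            have hI2m : (k:ℝ) * (F.card:ℝ) * (((free F s).card:ℝ) * ((free F (s+1)).card:ℝ))
                  * (((s:ℝ)+1) * (s.choose (k-1):ℝ))
                = (k:ℝ) * (F.card:ℝ) * (((free F s).card:ℝ) * ((free F (s+1)).card:ℝ))
                  * ((((s:ℝ)+2) - k) * ((s+1).choose (k-1):ℝ)) := by rw [hI2]
            have hscaled : 0 ≤ (((s:ℝ)+2) - k) * ((free F s).card:ℝ) *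
                ( ((s:ℝ)+2) * ((free F (s+2)).card:ℝ) * (n.choose (k-1):ℝ)
                  + ((free F (s+1)).card:ℝ) * ((k:ℝ) * (F.card:ℝ) * ((s+1).choose (k-1):ℝ))
                  - ((free F (s+1)).card:ℝ) * (((n:ℝ) - ((s:ℝ)+1)) * (n.choose (k-1):ℝ)) ) := by
              linarith [hH1, hH2, hI2m]
            by_contra hcon
            push_neg at hcon
            linarith [hscaled, mul_pos (mul_pos hskpos hApos)
              (by linarith :
                (0:ℝ) < ((free F (s+1)).card:ℝ) * (((n:ℝ) - ((s:ℝ)+1)) * (n.choose (k-1):ℝ))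
                  - (((s:ℝ)+2) * ((free F (s+2)).card:ℝ) * (n.choose (k-1):ℝ)
                  + ((free F (s+1)).card:ℝ) * ((k:ℝ) * (F.card:ℝ) * ((s+1).choose (k-1):ℝ))))]
          rcases Nat.eq_zero_or_pos (free F (s+2)).card with h0 | h0
          · left
            have hc0 : ((free F (s+2)).card : ℝ) = 0 := by exact_mod_cast h0
            rw [hc0] at hinv1
            have hkm : ((free F (s+1)).card:ℝ) * (((n:ℝ) - ((s:ℝ)+1)) * (n.choose (k-1):ℝ))
                ≤ ((free F (s+1)).card:ℝ)
                  * ((k:ℝ) * (F.card:ℝ) * ((s+1).choose (k-1):ℝ)) := by linarith [hinv1]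
            have hkm2 : ((n:ℝ) - ((s:ℝ)+1)) * (n.choose (k-1):ℝ)
                ≤ (k:ℝ) * (F.card:ℝ) * ((s+1).choose (k-1):ℝ) :=
              le_of_mul_le_mul_left hkm hBpos
            have h1 : (n - l + 1) * (s+1).choose (k-1) ≤ (n - (s+1)) * (l-1).choose (k-1) :=
              Nat.mul_le_mul (by omega) (Nat.choose_le_choose _ (by omega : s + 1 ≤ l - 1))
            have enl : ((n - l + 1 : ℕ):ℝ) = (n:ℝ) - l + 1 := by
              rw [Nat.cast_add, Nat.cast_sub hln]; norm_num
            have ens2 : ((n - (s+1) : ℕ) : ℝ) = (n:ℝ) - ((s:ℝ)+1) := by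
              rw [Nat.cast_sub hsn]; push_cast; ring
            have hmonoR : ((n:ℝ) - l + 1) * ((s+1).choose (k-1):ℝ)
                ≤ ((n:ℝ) - ((s:ℝ)+1)) * ((l-1).choose (k-1):ℝ) := by
              have hc : (((n - l + 1) * (s+1).choose (k-1) : ℕ) : ℝ)
                  ≤ (((n - (s+1)) * (l-1).choose (k-1) : ℕ) : ℝ) := Nat.cast_le.2 h1
              rw [Nat.cast_mul, Nat.cast_mul, enl, ens2] at hc
              push_cast at hc ⊢
              exact hc
            have hBs1pos : (0:ℝ) < ((s+1).choose (k-1) : ℝ) := by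
              exact_mod_cast Nat.choose_pos (by omega : k - 1 ≤ s + 1)
            have hBl0 : (0:ℝ) ≤ ((l-1).choose (k-1) : ℝ) := by positivity
            have hfin : (((n:ℝ) - l + 1) * (n.choose (k-1):ℝ)) * ((s+1).choose (k-1):ℝ)
                ≤ ((k:ℝ) * (F.card:ℝ) * ((l-1).choose (k-1):ℝ)) * ((s+1).choose (k-1):ℝ) := by
              have e1' : (((n:ℝ) - l + 1) * (n.choose (k-1):ℝ)) * ((s+1).choose (k-1):ℝ)
                  ≤ (((n:ℝ) - ((s:ℝ)+1)) * (n.choose (k-1):ℝ)) * ((l-1).choose (k-1):ℝ) := by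
                linarith [mul_le_mul_of_nonneg_left hmonoR hCC0]
              have e2' : (((n:ℝ) - ((s:ℝ)+1)) * (n.choose (k-1):ℝ)) * ((l-1).choose (k-1):ℝ)
                  ≤ ((k:ℝ) * (F.card:ℝ) * ((s+1).choose (k-1):ℝ)) * ((l-1).choose (k-1):ℝ) := by
                linarith [mul_le_mul_of_nonneg_right hkm2 hBl0]
              linarith [e1', e2']
            exact le_of_mul_le_mul_right hfin hBs1pos
          · right
            constructor
            · exact h0
            · push_cast
              push_cast at hinv1
              linarith [hinv1]
    have hfinal := main (l-1) (by omega) (by omega)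
    have hl1 : l - 1 + 1 = l := by omega
    rcases hfinal with hgoal | ⟨hpos, _⟩
    · exact hgoal
    · rw [hl1, card_free_top F hcov] at hpos
      omega
  have hBlpos : (0:ℝ) < ((l-1).choose (k-1) : ℝ) := by
    exact_mod_cast Nat.choose_pos (by omega : k - 1 ≤ l - 1)
  have hnk : (0:ℝ) < (n:ℝ) - k + 1 := by
    have : (k:ℝ) ≤ (n:ℝ) := by exact_mod_cast hkn
    linarith
  have hkpos : (0:ℝ) < (k:ℝ) := by exact_mod_cast hk
  rw [div_le_iff₀ hBlpos, div_mul_eq_mul_div, div_le_iff₀ hnk]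
  have h1 : (((n:ℝ) - l + 1) * (n.choose (k-1):ℝ)) * ((n:ℝ) - k + 1)
      ≤ ((k:ℝ) * (F.card:ℝ) * ((l-1).choose (k-1):ℝ)) * ((n:ℝ) - k + 1) :=
    mul_le_mul_of_nonneg_right key (le_of_lt hnk)
  have h2 : (k:ℝ) * (((n:ℝ) - l + 1) * (n.choose k : ℝ))
      ≤ (k:ℝ) * ((F.card:ℝ) * ((l-1).choose (k-1):ℝ) * ((n:ℝ) - k + 1)) := by
    have hidR2 : ((n:ℝ) - l + 1) * ((k:ℝ) * (n.choose k : ℝ))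
        = ((n:ℝ) - l + 1) * (((n:ℝ) - k + 1) * (n.choose (k-1):ℝ)) := by rw [hidR]
    linarith [h1, hidR2]
  have h3 := le_of_mul_le_mul_left h2 hkpos
  linarith [h3]
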